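/- Let X, K, Z be finite sets and P_{XZ} a probability distribution on X × Z with Z-marginal P_Z, and set L := |X|/|K| (a positive real). Then every function g : X → K satisfies S(g(X)|Z) ≥ E_L(P_{XZ}, Q_X^unif × P_Z). -/

import Mathlib

open Finset

noncomputable section

/-- Total variation distance between two finitely supported distributions. -/
def tv {A : Type*} [Fintype A] (P Q : A → ℝ) : ℝ := (1 / 2) * ∑ a, |P a - Q a|

/-- The `E_γ` metric `E_γ(P,Q) = ∑_a max (P a − γ·Q a) 0`. -/
def Egamma {A : Type*} [Fintype A] (γ : ℝ) (P Q : A → ℝ) : ℝ :=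
  ∑ a, max (P a - γ * Q a) 0

lemma max_add_le_aux (u v c : ℝ) (hu : 0 ≤ u) (hv : 0 ≤ v) (hc : 0 ≤ c) :
    max (u - c) 0 + max (v - c) 0 ≤ max (u + v - c) 0 := by
  rcases le_total (u - c) 0 with h1 | h1 <;> rcases le_total (v - c) 0 with h2 | h2
  · simp [max_eq_right h1, max_eq_right h2, le_max_right]
  · rw [max_eq_right h1, max_eq_left h2]
    have := le_max_left (u + v - c) 0; linarith
  · rw [max_eq_left h1, max_eq_right h2]
    have := le_max_left (u + v - c) 0; linarith
  · rw [max_eq_left h1, max_eq_left h2]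
    have := le_max_left (u + v - c) 0; linarith

lemma sum_max_sub_le {α : Type*} (S : Finset α) (p : α → ℝ) (c : ℝ)
    (hp : ∀ x ∈ S, 0 ≤ p x) (hc : 0 ≤ c) :
    ∑ x ∈ S, max (p x - c) 0 ≤ max ((∑ x ∈ S, p x) - c) 0 := by
  induction S using Finset.cons_induction with
  | empty => simp only [Finset.sum_empty]; exact le_max_right _ _
  | cons a s ha ih =>
    rw [Finset.sum_cons, Finset.sum_cons]
    have h1 : ∀ x ∈ s, 0 ≤ p x := fun x hx => hp x (Finset.mem_cons_of_mem hx)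
    have h2 : 0 ≤ ∑ x ∈ s, p x := Finset.sum_nonneg h1
    calc max (p a - c) 0 + ∑ x ∈ s, max (p x - c) 0
        ≤ max (p a - c) 0 + max ((∑ x ∈ s, p x) - c) 0 := add_le_add le_rfl (ih h1)
      _ ≤ max (p a + ∑ x ∈ s, p x - c) 0 :=
          max_add_le_aux _ _ _ (hp a (Finset.mem_cons_self a s)) h2 hc

/-- privacy amplification converse: with `L = |X|/|K|`, every
function `g : X → K` satisfies
`S(g(X)|Z) = d(P_{g(X)Z}, Q_K^unif × P_Z) ≥ E_L(P_{XZ}, Q_X^unif × P_Z)`. -/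
theorem privacy_amplification_converse
    {X K Z : Type*} [Fintype X] [Fintype K] [Fintype Z]
    [Nonempty X] [Nonempty K] [DecidableEq K]
    (PXZ : X × Z → ℝ)
    (hpos : ∀ q, 0 ≤ PXZ q) (hsum : ∑ q, PXZ q = 1)
    (L : ℝ) (hL : L = (Fintype.card X : ℝ) / (Fintype.card K : ℝ))
    (g : X → K) :
    Egamma L PXZ
        (fun q : X × Z => (Fintype.card X : ℝ)⁻¹ * ∑ x, PXZ (x, q.2))
      ≤ tv (fun q : K × Z => ∑ x ∈ univ.filter (fun x => g x = q.1), PXZ (x, q.2))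
           (fun q : K × Z => (Fintype.card K : ℝ)⁻¹ * ∑ x, PXZ (x, q.2)) := by
  have hX : (0 : ℝ) < Fintype.card X := by
    exact_mod_cast Fintype.card_pos
  have hK : (0 : ℝ) < Fintype.card K := by
    exact_mod_cast Fintype.card_pos
  set PZ : Z → ℝ := fun z => ∑ x, PXZ (x, z) with hPZ
  set c : Z → ℝ := fun z => (Fintype.card K : ℝ)⁻¹ * PZ z with hc
  have hcnn : ∀ z, 0 ≤ c z := by
    intro z
    exact mul_nonneg (inv_nonneg.mpr hK.le) (Finset.sum_nonneg fun x _ => hpos _)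
  set A : K × Z → ℝ :=
    fun q => ∑ x ∈ univ.filter (fun x => g x = q.1), PXZ (x, q.2) with hA
  -- Step 1: Egamma equals the X×Z sum of positive parts against c.
  have hE : Egamma L PXZ (fun q : X × Z => (Fintype.card X : ℝ)⁻¹ * ∑ x, PXZ (x, q.2))
      = ∑ q : X × Z, max (PXZ q - c q.2) 0 := by
    unfold Egamma
    refine Finset.sum_congr rfl fun q _ => ?_
    have : L * ((Fintype.card X : ℝ)⁻¹ * ∑ x, PXZ (x, q.2)) = c q.2 := by
      rw [hL, hc]
      field_simp
      ring
    rw [this]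
  -- Step 2: key inequality via fiberwise grouping.
  have hkey : ∑ q : X × Z, max (PXZ q - c q.2) 0
      ≤ ∑ q : K × Z, max (A q - c q.2) 0 := by
    rw [Fintype.sum_prod_type_right, Fintype.sum_prod_type_right]
    refine Finset.sum_le_sum fun z _ => ?_
    have hfib : ∑ x : X, max (PXZ (x, z) - c z) 0
        = ∑ k : K, ∑ x ∈ univ.filter (fun x => g x = k),
            max (PXZ (x, z) - c z) 0 :=
      (Finset.sum_fiberwise univ g (fun x => max (PXZ (x, z) - c z) 0)).symm
    rw [hfib]
    exact Finset.sum_le_sum fun k _ =>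
      sum_max_sub_le _ _ _ (fun x _ => hpos _) (hcnn z)
  -- Step 3: the tv distance equals the K×Z sum of positive parts.
  have hsumA : ∑ q : K × Z, A q = 1 := by
    rw [Fintype.sum_prod_type_right]
    have : ∀ z : Z, ∑ k : K, A (k, z) = ∑ x : X, PXZ (x, z) := by
      intro z
      exact Finset.sum_fiberwise univ g (fun x => PXZ (x, z))
    calc ∑ z, ∑ k, A (k, z) = ∑ z, ∑ x, PXZ (x, z) := by
          exact Finset.sum_congr rfl fun z _ => this z
      _ = ∑ q : X × Z, PXZ q := (Fintype.sum_prod_type_right _).symm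
      _ = 1 := hsum
  have hsumB : ∑ q : K × Z, c q.2 = 1 := by
    rw [Fintype.sum_prod_type_right]
    have h1 : ∀ z : Z, ∑ _k : K, c z = PZ z := by
      intro z
      rw [Finset.sum_const, Finset.card_univ, nsmul_eq_mul, hc]
      field_simp
    calc ∑ z, ∑ _k : K, c z = ∑ z, PZ z := Finset.sum_congr rfl fun z _ => h1 z
      _ = ∑ q : X × Z, PXZ q := (Fintype.sum_prod_type_right _).symm
      _ = 1 := hsum
  have hdiff : ∑ q : K × Z, (A q - c q.2) = 0 := by
    rw [Finset.sum_sub_distrib, hsumA, hsumB]; ring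
  have htv : tv A (fun q : K × Z => (Fintype.card K : ℝ)⁻¹ * ∑ x, PXZ (x, q.2))
      = ∑ q : K × Z, max (A q - c q.2) 0 := by
    unfold tv
    have habs : ∀ t : ℝ, |t| = 2 * max t 0 - t := by
      intro t
      rcases le_total t 0 with h | h
      · rw [abs_of_nonpos h, max_eq_right h]; ring
      · rw [abs_of_nonneg h, max_eq_left h]; ring
    have : ∑ q : K × Z, |A q - (Fintype.card K : ℝ)⁻¹ * ∑ x, PXZ (x, q.2)|
        = ∑ q : K × Z, (2 * max (A q - c q.2) 0 - (A q - c q.2)) :=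
      Finset.sum_congr rfl fun q _ => habs _
    rw [this, Finset.sum_sub_distrib, hdiff, ← Finset.mul_sum]
    ring
  rw [hE, htv]
  exact hkey
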